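/- Let F_{3,2} : ℝ^5 → ℝ^5 be given by F_{3,2}(x,y,u1,u2,u3) = (x³+y²+u1·x+u2·y+u3·x², x·y, u1, u2, u3). Then for every point q = (x,y,u1,u2,u3) ∈ ℝ^5, the derivative of F_{3,2} at q applied to the vector ξ_2(q) = (y+u2, x²+u1+u3·x, −5xy−3u2·u3, −3u1, −4u2) equals η_2(F_{3,2}(q)), where η_2(X,Y,U1,U2,U3) = (4U3·Y+2U1·U2, X, −5Y−3U2·U3, −3U1, −4U2). In particular η_2 is liftable over F_{3,2}. -/

import Mathlib

/-- The stable map `F₃₂` of discrete algebra type `B_{3,2}`. -/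
noncomputable def F32 : ℝ × ℝ × ℝ × ℝ × ℝ → ℝ × ℝ × ℝ × ℝ × ℝ :=
  fun (x, y, u1, u2, u3) =>
    (x^3 + y^2 + u1*x + u2*y + u3*x^2, x*y, u1, u2, u3)

/-- The vector field `η₂` on the target of `F₃₂`. -/
noncomputable def eta2 : ℝ × ℝ × ℝ × ℝ × ℝ → ℝ × ℝ × ℝ × ℝ × ℝ :=
  fun (X, Y, U1, U2, U3) =>
    (4*U3*Y + 2*U1*U2, X, -5*Y - 3*U2*U3, -3*U1, -4*U2)

/-- The lowerable vector field `ξ₂` on the source of `F₃₂`. -/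
noncomputable def xi2 : ℝ × ℝ × ℝ × ℝ × ℝ → ℝ × ℝ × ℝ × ℝ × ℝ :=
  fun (x, y, u1, u2, u3) =>
    (y + u2, x^2 + u1 + u3*x, -5*x*y - 3*u2*u3, -3*u1, -4*u2)

/-- `η₂` is liftable over `F₃₂` via `ξ₂`:
for every `q`, `d(F₃₂)_q (ξ₂ q) = η₂ (F₃₂ q)`. -/
theorem eta2_liftable_over_F32 :
    ∀ q : ℝ × ℝ × ℝ × ℝ × ℝ, fderiv ℝ F32 q (xi2 q) = eta2 (F32 q) := by
  intro q
  have hF : F32 = fun p : ℝ × ℝ × ℝ × ℝ × ℝ =>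
      ((p.1*p.1*p.1 + p.2.1*p.2.1 + p.2.2.1*p.1 + p.2.2.2.1*p.2.1 + p.2.2.2.2*(p.1*p.1),
        p.1*p.2.1, p.2.2.1, p.2.2.2.1, p.2.2.2.2) : ℝ × ℝ × ℝ × ℝ × ℝ) := by
    funext ⟨x, y, u1, u2, u3⟩
    have hh : x^3 + y^2 + u1*x + u2*y + u3*x^2
        = x*x*x + y*y + u1*x + u2*y + u3*(x*x) := by ring
    simp [F32, hh]
  have hX : HasFDerivAt (fun p : ℝ × ℝ × ℝ × ℝ × ℝ => p.1) _ q := hasFDerivAt_fst (𝕜 := ℝ)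
  have hY : HasFDerivAt (fun p : ℝ × ℝ × ℝ × ℝ × ℝ => p.2.1) _ q := (hasFDerivAt_snd (𝕜 := ℝ)).fst
  have hU1 : HasFDerivAt (fun p : ℝ × ℝ × ℝ × ℝ × ℝ => p.2.2.1) _ q :=
    (HasFDerivAt.snd (hasFDerivAt_snd (𝕜 := ℝ) (p := q))).fst
  have hU2 : HasFDerivAt (fun p : ℝ × ℝ × ℝ × ℝ × ℝ => p.2.2.2.1) _ q :=
    (HasFDerivAt.snd (HasFDerivAt.snd (hasFDerivAt_snd (𝕜 := ℝ) (p := q)))).fst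
  have hU3 : HasFDerivAt (fun p : ℝ × ℝ × ℝ × ℝ × ℝ => p.2.2.2.2) _ q :=
    HasFDerivAt.snd (HasFDerivAt.snd (HasFDerivAt.snd (hasFDerivAt_snd (𝕜 := ℝ) (p := q))))
  have h := HasFDerivAt.prodMk ((((((hX.mul hX).mul hX).add (hY.mul hY)).add (hU1.mul hX)).add (hU2.mul hY)).add
        (hU3.mul (hX.mul hX)))
      (HasFDerivAt.prodMk (hX.mul hY) (HasFDerivAt.prodMk hU1 (HasFDerivAt.prodMk hU2 hU3)))
  change HasFDerivAt (fun p : ℝ × ℝ × ℝ × ℝ × ℝ =>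
      ((p.1*p.1*p.1 + p.2.1*p.2.1 + p.2.2.1*p.1 + p.2.2.2.1*p.2.1 + p.2.2.2.2*(p.1*p.1),
        p.1*p.2.1, p.2.2.1, p.2.2.2.1, p.2.2.2.2) : ℝ × ℝ × ℝ × ℝ × ℝ)) _ q at h
  rw [← hF] at h
  rw [h.fderiv]
  obtain ⟨x, y, u1, u2, u3⟩ := q
  simp [xi2, eta2, F32, Prod.ext_iff]
  refine ⟨by ring, by ring, by ring⟩
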